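/- Let L_1(x) = I_{H_1} + Σ_{j=1}^g A_j x_j and L_2(x) = I_{H_2} + Σ_{j=1}^g B_j x_j be monic linear operator pencils with bounded self-adjoint coefficients on separable real Hilbert spaces H_1, H_2, and let 𝒦 be an infinite-dimensional separable real Hilbert space. Then the following are equivalent: (i) for every closed subspace K' of 𝒦 and every g-tuple X of bounded self-adjoint operators on K', L_1(X) ⪰ 0 implies L_2(X) ⪰ 0; (ii) for every n ∈ ℕ, D_{L_1}(n) ⊆ D_{L_2}(n). -/

import Mathlib

open scoped RealInnerProductSpace

noncomputable section

variable {E H K : Type*}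

/-- A bounded operator on a real inner product space is symmetric (self-adjoint). -/
def OpIsSymm [NormedAddCommGroup E] [InnerProductSpace ℝ E] (T : E →L[ℝ] E) : Prop :=
  ∀ u v : E, ⟪T u, v⟫ = ⟪u, T v⟫

/-- A bounded operator on a real inner product space is positive semidefinite. -/
def OpIsPos [NormedAddCommGroup E] [InnerProductSpace ℝ E] (T : E →L[ℝ] E) : Prop :=
  OpIsSymm T ∧ ∀ v : E, 0 ≤ ⟪T v, v⟫

/-- A bounded operator is positive definite: `T - ε • id` is positive semidefinite
for some `ε > 0`. -/
def OpIsPosDef [NormedAddCommGroup E] [InnerProductSpace ℝ E] (T : E →L[ℝ] E) : Prop :=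
  ∃ ε : ℝ, 0 < ε ∧ OpIsPos (T - ε • ContinuousLinearMap.id ℝ E)

/-- The block operator on the Hilbert direct sum `H^n` whose `(i,k)` block is `c i k`. -/
def blockOp [NormedAddCommGroup H] [InnerProductSpace ℝ H] {n : ℕ}
    (c : Fin n → Fin n → (H →L[ℝ] H)) :
    (PiLp 2 fun _ : Fin n => H) →L[ℝ] (PiLp 2 fun _ : Fin n => H) :=
  (((PiLp.continuousLinearEquiv 2 ℝ (fun _ : Fin n => H)).symm.toContinuousLinearMap.comp
    (ContinuousLinearMap.pi fun i : Fin n =>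
      ∑ k : Fin n, (c i k).comp (ContinuousLinearMap.proj k))).comp
    (PiLp.continuousLinearEquiv 2 ℝ (fun _ : Fin n => H)).toContinuousLinearMap)

/-- Evaluation of the homogeneous linear pencil `I_H x₀ + Σ_j A_j x_j` at a tuple of
`n × n` matrices: the operator on `H^n` with `(i,k)` block
`(X₀)_{ik} I_H + Σ_j (X_j)_{ik} A_j`. -/
def hEval [NormedAddCommGroup H] [InnerProductSpace ℝ H] {g n : ℕ}
    (A : Fin g → (H →L[ℝ] H)) (X0 : Matrix (Fin n) (Fin n) ℝ)
    (X : Fin g → Matrix (Fin n) (Fin n) ℝ) :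
    (PiLp 2 fun _ : Fin n => H) →L[ℝ] (PiLp 2 fun _ : Fin n => H) :=
  blockOp fun i k => X0 i k • (1 : H →L[ℝ] H) + ∑ j, X j i k • A j

/-- Evaluation of the monic linear pencil `I_H + Σ_j A_j x_j` at a tuple of
`n × n` matrices. -/
def monicEval [NormedAddCommGroup H] [InnerProductSpace ℝ H] {g n : ℕ}
    (A : Fin g → (H →L[ℝ] H)) (X : Fin g → Matrix (Fin n) (Fin n) ℝ) :
    (PiLp 2 fun _ : Fin n => H) →L[ℝ] (PiLp 2 fun _ : Fin n => H) :=
  hEval A 1 X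

/-- Positivity of the evaluation `L(X) = A₀ ⊗ I_K + Σ_j A_j ⊗ X_j` of a linear operator
pencil at a tuple of bounded operators on a Hilbert space `K`. -/
def operPencilPos [NormedAddCommGroup H] [InnerProductSpace ℝ H]
    [NormedAddCommGroup K] [InnerProductSpace ℝ K] {g : ℕ}
    (A0 : H →L[ℝ] H) (A : Fin g → (H →L[ℝ] H)) (X : Fin g → (K →L[ℝ] K)) : Prop :=
  ∀ (m : ℕ) (h : Fin m → H) (u : Fin m → K),
    0 ≤ ∑ i, ∑ l,
      (⟪A0 (h i), h l⟫ * ⟪u i, u l⟫ + ∑ j, ⟪A j (h i), h l⟫ * ⟪X j (u i), u l⟫)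

/-- A bundled separable real Hilbert space. -/
structure SepHilbert where
  carrier : Type
  [nacg : NormedAddCommGroup carrier]
  [ips : InnerProductSpace ℝ carrier]
  [cs : CompleteSpace carrier]
  [sep : TopologicalSpace.SeparableSpace carrier]

attribute [instance] SepHilbert.nacg SepHilbert.ips SepHilbert.cs SepHilbert.sep


section Aux
variable [NormedAddCommGroup H] [InnerProductSpace ℝ H] [NormedAddCommGroup K] [InnerProductSpace ℝ K]

lemma blockOp_apply {n : ℕ} (c : Fin n → Fin n → (H →L[ℝ] H))
    (v : PiLp 2 fun _ : Fin n => H) (i : Fin n) :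
    blockOp c v i = ∑ k, c i k (v k) := by
  simp [blockOp, ContinuousLinearMap.sum_apply]

lemma inner_blockOp {n : ℕ} (c : Fin n → Fin n → (H →L[ℝ] H))
    (v w : PiLp 2 fun _ : Fin n => H) :
    ⟪blockOp c v, w⟫ = ∑ i, ∑ k, ⟪c i k (v k), w i⟫ := by
  rw [PiLp.inner_apply]
  exact Finset.sum_congr rfl fun i _ => by rw [blockOp_apply, sum_inner]

lemma inner_monicEval {g n : ℕ} (A : Fin g → (H →L[ℝ] H))
    (X : Fin g → Matrix (Fin n) (Fin n) ℝ) (v w : PiLp 2 fun _ : Fin n => H) :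
    ⟪monicEval A X v, w⟫ = (∑ i, ⟪v i, w i⟫) + ∑ i, ∑ k, ∑ j, X j i k * ⟪A j (v k), w i⟫ := by
  rw [monicEval, hEval, inner_blockOp]
  have h1 : ∀ i k : Fin n,
      ⟪((1 : Matrix (Fin n) (Fin n) ℝ) i k • (1 : H →L[ℝ] H) + ∑ j, X j i k • A j) (v k), w i⟫
      = (1 : Matrix (Fin n) (Fin n) ℝ) i k * ⟪v k, w i⟫ + ∑ j, X j i k * ⟪A j (v k), w i⟫ := by
    intro i k
    simp [ContinuousLinearMap.add_apply, ContinuousLinearMap.sum_apply, inner_add_left,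
      sum_inner, real_inner_smul_left]
  simp_rw [h1, Finset.sum_add_distrib]
  congr 1
  refine Finset.sum_congr rfl fun i _ => ?_
  simp [Matrix.one_apply]

lemma sum_swap3 {α ι₁ ι₂ ι₃ : Type*} [AddCommMonoid α] [Fintype ι₁] [Fintype ι₂] [Fintype ι₃]
    (F : ι₁ → ι₂ → ι₃ → α) :
    ∑ i, ∑ l, ∑ j, F i l j = ∑ j, ∑ i, ∑ l, F i l j :=
  (Finset.sum_congr rfl fun _ _ => Finset.sum_comm).trans Finset.sum_comm

lemma sum_swap4 {α ι₁ ι₂ ι₃ ι₄ : Type*} [AddCommMonoid α] [Fintype ι₁] [Fintype ι₂]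
    [Fintype ι₃] [Fintype ι₄] (F : ι₁ → ι₂ → ι₃ → ι₄ → α) :
    ∑ i, ∑ l, ∑ a, ∑ b, F i l a b = ∑ a, ∑ b, ∑ i, ∑ l, F i l a b := by
  refine (Finset.sum_congr rfl fun i _ => Finset.sum_comm).trans ?_
  refine Finset.sum_comm.trans ?_
  refine Finset.sum_congr rfl fun a _ => ?_
  exact (Finset.sum_congr rfl fun i _ => Finset.sum_comm).trans Finset.sum_comm

lemma monicEval_symm {g n : ℕ} {A : Fin g → (H →L[ℝ] H)} (hA : ∀ j, OpIsSymm (A j))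
    {X : Fin g → Matrix (Fin n) (Fin n) ℝ} (hX : ∀ j, (X j).IsSymm) :
    OpIsSymm (monicEval A X) := by
  intro u w
  have h2 : ⟪u, monicEval A X w⟫ = ⟪monicEval A X w, u⟫ := real_inner_comm _ _
  rw [h2, inner_monicEval, inner_monicEval]
  congr 1
  · exact Finset.sum_congr rfl fun i _ => real_inner_comm _ _
  · rw [Finset.sum_comm]
    refine Finset.sum_congr rfl fun i _ => Finset.sum_congr rfl fun k _ =>
      Finset.sum_congr rfl fun j _ => ?_
    rw [(hX j).apply i k, hA j (u i) (w k), real_inner_comm]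

lemma gram_expand {m n : ℕ} (S : H →L[ℝ] H) (T : K →L[ℝ] K)
    (h : Fin m → H) (e : Fin n → K) (c : Fin m → Fin n → ℝ)
    (u : Fin m → K) (hu : ∀ i, u i = ∑ a, c i a • e a)
    (v : Fin n → H) (hv : ∀ a, v a = ∑ i, c i a • h i) :
    ∑ i, ∑ l, ⟪S (h i), h l⟫ * ⟪T (u i), u l⟫
      = ∑ a, ∑ b, ⟪S (v b), v a⟫ * ⟪T (e b), e a⟫ := by
  have hTu : ∀ i l, ⟪T (u i), u l⟫ = ∑ a, ∑ b, (c i b * c l a) * ⟪T (e b), e a⟫ := by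
    intro i l
    rw [hu i, hu l, map_sum, sum_inner]
    simp_rw [map_smul, inner_sum, real_inner_smul_left, real_inner_smul_right]
    rw [Finset.sum_comm]
    exact Finset.sum_congr rfl fun a _ => Finset.sum_congr rfl fun b _ => by ring
  have hSv : ∀ a b, ⟪S (v b), v a⟫ = ∑ i, ∑ l, (c i b * c l a) * ⟪S (h i), h l⟫ := by
    intro a b
    rw [hv a, hv b, map_sum, sum_inner]
    simp_rw [map_smul, inner_sum, real_inner_smul_left, real_inner_smul_right]
    exact Finset.sum_congr rfl fun i _ => Finset.sum_congr rfl fun l _ => by ring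
  calc ∑ i, ∑ l, ⟪S (h i), h l⟫ * ⟪T (u i), u l⟫
      = ∑ i, ∑ l, ∑ a, ∑ b, ⟪S (h i), h l⟫ * ((c i b * c l a) * ⟪T (e b), e a⟫) := by
        simp_rw [hTu, Finset.mul_sum]
    _ = ∑ a, ∑ b, ∑ i, ∑ l, ⟪S (h i), h l⟫ * ((c i b * c l a) * ⟪T (e b), e a⟫) := sum_swap4 _
    _ = ∑ a, ∑ b, ⟪S (v b), v a⟫ * ⟪T (e b), e a⟫ := by
        refine Finset.sum_congr rfl fun a _ => Finset.sum_congr rfl fun b _ => ?_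
        rw [hSv, Finset.sum_mul]
        refine Finset.sum_congr rfl fun i _ => ?_
        rw [Finset.sum_mul]
        exact Finset.sum_congr rfl fun l _ => by ring

lemma pencil_T1 {g n : ℕ} (A : Fin g → (H →L[ℝ] H)) (X : Fin g → (K →L[ℝ] K))
    (e : Fin n → K) (he : Orthonormal ℝ e)
    (Y : Fin g → Matrix (Fin n) (Fin n) ℝ) (hY : ∀ j a b, Y j a b = ⟪X j (e b), e a⟫)
    (hpos : operPencilPos (1 : H →L[ℝ] H) A X) (v : PiLp 2 fun _ : Fin n => H) :
    0 ≤ ⟪monicEval A Y v, v⟫ := by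
  classical
  refine le_trans (hpos n (fun i => v i) e) (le_of_eq ?_)
  rw [inner_monicEval]
  have key : ∀ i l, ⟪(1 : H →L[ℝ] H) (v i), v l⟫ * ⟪e i, e l⟫
      + ∑ j, ⟪A j (v i), v l⟫ * ⟪X j (e i), e l⟫
      = (if i = l then ⟪v i, v l⟫ else 0) + ∑ j, Y j l i * ⟪A j (v i), v l⟫ := by
    intro i l
    rw [ContinuousLinearMap.one_apply, orthonormal_iff_ite.mp he i l]
    congr 1
    · simp [mul_ite]
    · refine Finset.sum_congr rfl fun j _ => ?_
      rw [← hY, mul_comm]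
  simp_rw [key, Finset.sum_add_distrib]
  congr 1
  · exact Finset.sum_congr rfl fun i _ => by simp
  · exact Finset.sum_comm

lemma pencil_T2 {g n m : ℕ} (B : Fin g → (H →L[ℝ] H)) (X : Fin g → (K →L[ℝ] K))
    (e : Fin n → K) (he : Orthonormal ℝ e)
    (Y : Fin g → Matrix (Fin n) (Fin n) ℝ) (hY : ∀ j a b, Y j a b = ⟪X j (e b), e a⟫)
    (hpos : ∀ v : PiLp 2 fun _ : Fin n => H, 0 ≤ ⟪monicEval B Y v, v⟫)
    (h : Fin m → H) (u : Fin m → K)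
    (hu : ∀ i, u i = ∑ a, ⟪e a, u i⟫ • e a) :
    0 ≤ ∑ i, ∑ l, (⟪(1 : H →L[ℝ] H) (h i), h l⟫ * ⟪u i, u l⟫
      + ∑ j, ⟪B j (h i), h l⟫ * ⟪X j (u i), u l⟫) := by
  classical
  set c : Fin m → Fin n → ℝ := fun i a => ⟪e a, u i⟫ with hc
  set v : PiLp 2 (fun _ : Fin n => H) := WithLp.toLp 2 (fun a => ∑ i, c i a • h i) with hvdef
  have hva : ∀ a, v a = ∑ i, c i a • h i := fun a => rfl
  have h0 := hpos v
  rw [inner_monicEval] at h0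
  refine le_trans h0 (le_of_eq ?_)
  have hg1 := gram_expand (1 : H →L[ℝ] H) (1 : K →L[ℝ] K) h e c u hu (fun a => v a) hva
  have hg2 := fun j => gram_expand (B j) (X j) h e c u hu (fun a => v a) hva
  simp_rw [ContinuousLinearMap.one_apply] at hg1
  calc (∑ a, ⟪v a, v a⟫) + ∑ a, ∑ b, ∑ j, Y j a b * ⟪B j (v b), v a⟫
      = (∑ a, ∑ b, ⟪v b, v a⟫ * ⟪e b, e a⟫)
        + ∑ j, ∑ a, ∑ b, ⟪B j (v b), v a⟫ * ⟪X j (e b), e a⟫ := by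
        congr 1
        · refine Finset.sum_congr rfl fun a _ => ?_
          symm
          simp [orthonormal_iff_ite.mp he, mul_ite]
        · rw [sum_swap3]
          refine Finset.sum_congr rfl fun a _ => Finset.sum_congr rfl fun b _ =>
            Finset.sum_congr rfl fun j _ => ?_
          rw [← hY, mul_comm]
    _ = (∑ i, ∑ l, ⟪h i, h l⟫ * ⟪u i, u l⟫)
        + ∑ j, ∑ i, ∑ l, ⟪B j (h i), h l⟫ * ⟪X j (u i), u l⟫ := by
        rw [← hg1]
        congr 1
        exact (Finset.sum_congr rfl fun j _ => (hg2 j)).symm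
    _ = ∑ i, ∑ l, (⟪(1 : H →L[ℝ] H) (h i), h l⟫ * ⟪u i, u l⟫
        + ∑ j, ⟪B j (h i), h l⟫ * ⟪X j (u i), u l⟫) := by
        simp_rw [ContinuousLinearMap.one_apply, Finset.sum_add_distrib]
        congr 1
        exact (sum_swap3 _).symm

end Aux

/-- inclusion of operator free Hilbert spectrahedra over an
infinite-dimensional separable Hilbert space `𝒦` is equivalent to inclusion of the
free Hilbert spectrahedra at all matrix levels. -/
theorem operator_inclusion_iff_matrix_inclusion
    {g : ℕ} {H1 H2 𝒦 : Type}
    [NormedAddCommGroup H1] [InnerProductSpace ℝ H1] [CompleteSpace H1]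
    [TopologicalSpace.SeparableSpace H1]
    [NormedAddCommGroup H2] [InnerProductSpace ℝ H2] [CompleteSpace H2]
    [TopologicalSpace.SeparableSpace H2]
    [NormedAddCommGroup 𝒦] [InnerProductSpace ℝ 𝒦] [CompleteSpace 𝒦]
    [TopologicalSpace.SeparableSpace 𝒦]
    (h𝒦 : ¬ FiniteDimensional ℝ 𝒦)
    (A : Fin g → (H1 →L[ℝ] H1)) (B : Fin g → (H2 →L[ℝ] H2))
    (hA : ∀ j, OpIsSymm (A j)) (hB : ∀ j, OpIsSymm (B j)) :
    (∀ (K' : Submodule ℝ 𝒦), IsClosed (K' : Set 𝒦) →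
      ∀ X : Fin g → (K' →L[ℝ] K'), (∀ j, OpIsSymm (X j)) →
        operPencilPos (1 : H1 →L[ℝ] H1) A X → operPencilPos (1 : H2 →L[ℝ] H2) B X) ↔
    (∀ (n : ℕ) (X : Fin g → Matrix (Fin n) (Fin n) ℝ), (∀ j, (X j).IsSymm) →
      OpIsPos (monicEval A X) → OpIsPos (monicEval B X)) := by
  constructor
  · -- operator inclusion → matrix inclusion
    intro hop n Xm hXm hposA
    obtain ⟨w, b, hb⟩ := exists_hilbertBasis ℝ 𝒦
    have hw : w.Infinite := by
      by_contra hfin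
      rw [Set.not_infinite] at hfin
      apply h𝒦
      haveI hfd : FiniteDimensional ℝ (Submodule.span ℝ w) :=
        FiniteDimensional.span_of_finite ℝ hfin
      have hcl : IsClosed ((Submodule.span ℝ w : Submodule ℝ 𝒦) : Set 𝒦) :=
        Submodule.closed_of_finiteDimensional _
      have htop : (Submodule.span ℝ w : Submodule ℝ 𝒦) = ⊤ := by
        have hd := b.dense_span
        rw [hb, Subtype.range_coe] at hd
        rw [← hcl.submodule_topologicalClosure_eq]
        exact hd
      haveI hfd2 : FiniteDimensional ℝ (⊤ : Submodule ℝ 𝒦) := htop ▸ hfd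
      exact Module.Finite.equiv Submodule.topEquiv
    haveI : Infinite ↥w := hw.to_subtype
    let f : ℕ ↪ ↥w := Infinite.natEmbedding ↥w
    let e0 : Fin n → 𝒦 := fun a => (f a : 𝒦)
    have he0 : Orthonormal ℝ e0 := by
      have hbo := b.orthonormal
      rw [hb] at hbo
      exact hbo.comp (fun a : Fin n => f a) (f.injective.comp Fin.val_injective)
    set K' : Submodule ℝ 𝒦 := Submodule.span ℝ (Set.range e0) with hK'
    haveI : FiniteDimensional ℝ K' := FiniteDimensional.span_of_finite ℝ (Set.finite_range e0)
    have hK'cl : IsClosed (K' : Set 𝒦) := Submodule.closed_of_finiteDimensional _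
    let e : Fin n → K' := fun a => ⟨e0 a, Submodule.subset_span (Set.mem_range_self a)⟩
    have he : Orthonormal ℝ e := by
      rw [orthonormal_iff_ite] at he0 ⊢
      intro a b2
      rw [Submodule.coe_inner]
      exact he0 a b2
    have hsp : ⊤ ≤ Submodule.span ℝ (Set.range e) := by
      intro x _
      have hx : (x : 𝒦) ∈ Submodule.span ℝ (Set.range e0) := x.2
      have himg : Submodule.span ℝ (Set.range e0)
          = Submodule.map K'.subtype (Submodule.span ℝ (Set.range e)) := by
        rw [Submodule.map_span]
        congr 1
        rw [← Set.range_comp]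
        rfl
      rw [himg] at hx
      obtain ⟨y, hy, hxy⟩ := hx
      have hyx : y = x := Subtype.ext hxy
      exact hyx ▸ hy
    let ob : OrthonormalBasis (Fin n) ℝ K' := OrthonormalBasis.mk he hsp
    have hob : ∀ x : K', x = ∑ a, ⟪e a, x⟫ • e a := by
      intro x
      have h1 := ob.sum_repr' x
      rw [OrthonormalBasis.coe_mk] at h1
      exact h1.symm
    let X' : Fin g → (K' →L[ℝ] K') := fun j =>
      ∑ a, ∑ b2, Xm j a b2 • ((innerSL ℝ (e b2)).smulRight (e a))
    have hX'app : ∀ j (x : K'), X' j x = ∑ a, ∑ b2, Xm j a b2 • (⟪e b2, x⟫ • e a) := by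
      intro j x
      simp [X', ContinuousLinearMap.sum_apply]
    have hvals : ∀ j a b2, ⟪X' j (e b2), e a⟫ = Xm j a b2 := by
      intro j p q
      rw [hX'app]
      simp [sum_inner, real_inner_smul_left, orthonormal_iff_ite.mp he,
        orthonormal_iff_ite.mp he0, Submodule.coe_inner, mul_ite]
      simp [e, orthonormal_iff_ite.mp he0, mul_ite]
    have hX'symm : ∀ j, OpIsSymm (X' j) := by
      intro j
      have hL : ∀ x y : K', ⟪X' j x, y⟫ = ∑ a, ∑ b2, Xm j a b2 * (⟪e b2, x⟫ * ⟪e a, y⟫) := by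
        intro x y
        rw [hX'app, sum_inner]
        refine Finset.sum_congr rfl fun a _ => ?_
        rw [sum_inner]
        refine Finset.sum_congr rfl fun b2 _ => ?_
        simp only [real_inner_smul_left]
      intro x y
      have hc : ⟪x, X' j y⟫ = ⟪X' j y, x⟫ := real_inner_comm _ _
      rw [hL, hc, hL]
      rw [Finset.sum_comm]
      refine Finset.sum_congr rfl fun a _ => Finset.sum_congr rfl fun b2 _ => ?_
      rw [(hXm j).apply a b2]
      ring
    have hopA : operPencilPos (1 : H1 →L[ℝ] H1) A X' := by
      intro m h u
      exact pencil_T2 A X' e he Xm (fun j a b2 => (hvals j a b2).symm) hposA.2 h u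
        (fun i => hob (u i))
    have hopB := hop K' hK'cl X' hX'symm hopA
    exact ⟨monicEval_symm hB hXm,
      fun v => pencil_T1 B X' e he Xm (fun j a b2 => (hvals j a b2).symm) hopB v⟩
  · -- matrix inclusion → operator inclusion
    intro hmat K' hK'cl X hXsym hposA
    intro m h u
    have hWfd : FiniteDimensional ℝ (Submodule.span ℝ (Set.range u)) :=
      FiniteDimensional.span_of_finite ℝ (Set.finite_range u)
    let W : Submodule ℝ K' := Submodule.span ℝ (Set.range u)
    haveI : FiniteDimensional ℝ W := hWfd
    let bW := stdOrthonormalBasis ℝ W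
    let e : Fin (Module.finrank ℝ W) → K' := fun a => (bW a : K')
    have he : Orthonormal ℝ e := by
      have hbo := bW.orthonormal
      rw [orthonormal_iff_ite] at hbo ⊢
      intro a b2
      rw [show ⟪e a, e b2⟫ = ⟪bW a, bW b2⟫ from (Submodule.coe_inner _ _ _).symm]
      exact hbo a b2
    let Y : Fin g → Matrix (Fin (Module.finrank ℝ W)) (Fin (Module.finrank ℝ W)) ℝ :=
      fun j => Matrix.of fun a b2 => ⟪X j (e b2), e a⟫
    have hY : ∀ j a b2, Y j a b2 = ⟪X j (e b2), e a⟫ := fun _ _ _ => rfl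
    have hYsym : ∀ j, (Y j).IsSymm := by
      intro j
      refine Matrix.IsSymm.ext fun a b2 => ?_
      show ⟪X j (e a), e b2⟫ = ⟪X j (e b2), e a⟫
      rw [hXsym j (e a) (e b2)]
      exact real_inner_comm _ _
    have hu : ∀ i, u i = ∑ a, ⟪e a, u i⟫ • e a := by
      intro i
      have hmem : u i ∈ W := Submodule.subset_span (Set.mem_range_self i)
      have h1 := bW.sum_repr' (⟨u i, hmem⟩ : W)
      have h2 := congrArg (Subtype.val) h1
      simpa [Submodule.coe_inner] using h2.symm
    have hApos : OpIsPos (monicEval A Y) :=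
      ⟨monicEval_symm hA hYsym, fun v => pencil_T1 A X e he Y hY hposA v⟩
    have hBpos := hmat _ Y hYsym hApos
    exact pencil_T2 B X e he Y hY hBpos.2 h u hu
end
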